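/- At every point of U, the forward characteristic derivative of the pressure satisfies p_t + c·p_x = −c²·(u_x − m·z_x − ((γ−1)/γ)·m_x·z); equivalently, β = −(p_t + c·p_x)/c² (Lemma 4.1, backward part). -/

import Mathlib

open Real

/-- Partial derivative with respect to `t` (the first coordinate). -/
noncomputable def pdt (f : ℝ × ℝ → ℝ) (pt : ℝ × ℝ) : ℝ := fderiv ℝ f pt (1, 0)

/-- Partial derivative with respect to `x` (the second coordinate). -/
noncomputable def pdx (f : ℝ × ℝ → ℝ) (pt : ℝ × ℝ) : ℝ := fderiv ℝ f pt (0, 1)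

/-- Lemma 4.1 (backward part): `p′ = p_t + c·p_x = −c²·β` on `U`. -/
theorem stmt_1
    (γ Kc : ℝ) (hγ : 1 < γ) (hKc : 0 < Kc)
    (U : Set (ℝ × ℝ)) (hU : IsOpen U)
    (u z m : ℝ × ℝ → ℝ)
    (hu : ContDiffOn ℝ 2 u U) (hz : ContDiffOn ℝ 2 z U) (hm : ContDiffOn ℝ 2 m U)
    (hzpos : ∀ pt ∈ U, 0 < z pt) (hmpos : ∀ pt ∈ U, 0 < m pt)
    (c p : ℝ × ℝ → ℝ)
    (hc : c = fun pt => Kc * m pt * z pt ^ ((γ + 1) / (γ - 1)))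
    (hp : p = fun pt => ((γ - 1) / (2 * γ) * Kc) * (m pt) ^ 2 * z pt ^ (2 * γ / (γ - 1)))
    (heq1 : ∀ pt ∈ U, pdt z pt + (c pt / m pt) * pdx u pt = 0)
    (heq2 : ∀ pt ∈ U, pdt u pt + m pt * c pt * pdx z pt + 2 * (p pt / m pt) * pdx m pt = 0)
    (heq3 : ∀ pt ∈ U, pdt m pt = 0)
    (α β : ℝ × ℝ → ℝ)
    (hα : α = fun pt => pdx u pt + m pt * pdx z pt + ((γ - 1) / γ) * pdx m pt * z pt)
    (hβ : β = fun pt => pdx u pt - m pt * pdx z pt - ((γ - 1) / γ) * pdx m pt * z pt)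
 :
    ∀ pt ∈ U, pdt p pt + c pt * pdx p pt = -(c pt) ^ 2 * β pt := by
  intro pt hpt
  have hmem : U ∈ nhds pt := hU.mem_nhds hpt
  have hγ0 : (0:ℝ) < γ := lt_trans one_pos hγ
  have hγ1 : γ - 1 ≠ 0 := sub_ne_zero.mpr (ne_of_gt hγ)
  have hzp := hzpos pt hpt
  have hmp := hmpos pt hpt
  -- differentiability
  have hdm : DifferentiableAt ℝ m pt :=
    ((hm.differentiableOn (by norm_num)).differentiableAt hmem)
  have hdz : DifferentiableAt ℝ z pt :=
    ((hz.differentiableOn (by norm_num)).differentiableAt hmem)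
  have hfm : HasFDerivAt m (fderiv ℝ m pt) pt := hdm.hasFDerivAt
  have hfz : HasFDerivAt z (fderiv ℝ z pt) pt := hdz.hasFDerivAt
  set Dm := fderiv ℝ m pt
  set Dz := fderiv ℝ z pt
  set e := 2 * γ / (γ - 1) with he
  set K := (γ - 1) / (2 * γ) * Kc with hK
  -- derivative of p
  have hzr : HasFDerivAt (fun q => z q ^ e) ((e * z pt ^ (e - 1)) • Dz) pt :=
    hfz.rpow_const (Or.inl (ne_of_gt hzp))
  have hm2 : HasFDerivAt (fun q => m q ^ 2) (m pt • Dm + m pt • Dm) pt := by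
    have := hfm.mul hfm
    simp only [pow_two]; exact this
  have hKm2 : HasFDerivAt (fun q => K * m q ^ 2) (K • (m pt • Dm + m pt • Dm)) pt :=
    hm2.const_mul K
  have hfp : HasFDerivAt p
      ((K * m pt ^ 2) • ((e * z pt ^ (e - 1)) • Dz)
        + (z pt ^ e) • (K • (m pt • Dm + m pt • Dm))) pt := by
    rw [hp]
    exact hKm2.mul hzr
  have hDp := hfp.fderiv
  have hpdt : pdt p pt = (K * m pt ^ 2) * ((e * z pt ^ (e - 1)) * pdt z pt)
      + (z pt ^ e) * (K * (m pt * pdt m pt + m pt * pdt m pt)) := by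
    simp [pdt, hDp, smul_eq_mul, mul_add, Dz, Dm]
  have hpdx : pdx p pt = (K * m pt ^ 2) * ((e * z pt ^ (e - 1)) * pdx z pt)
      + (z pt ^ e) * (K * (m pt * pdx m pt + m pt * pdx m pt)) := by
    simp [pdx, hDp, smul_eq_mul, mul_add, Dz, Dm]
  -- rpow identities
  have hA1 : z pt ^ (e - 1) = z pt ^ ((γ + 1) / (γ - 1)) := by
    congr 1
    rw [he, div_sub_one hγ1]
    ring
  have hA2 : z pt ^ e = z pt ^ ((γ + 1) / (γ - 1)) * z pt := by
    have : e = (γ + 1) / (γ - 1) + 1 := by rw [he, div_add_one hγ1]; ring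
    rw [this, Real.rpow_add hzp, Real.rpow_one]
  -- PDE relations
  have h1 : pdt z pt = -((c pt / m pt) * pdx u pt) := by
    have := heq1 pt hpt; linarith
  have h3 : pdt m pt = 0 := heq3 pt hpt
  set A := z pt ^ ((γ + 1) / (γ - 1)) with hAdef
  have hApos : 0 < A := Real.rpow_pos_of_pos hzp _
  rw [hpdt, hpdx, hβ, h1, h3, hA1, hA2]
  have hcpt : c pt = Kc * m pt * A := by rw [hc]
  rw [hcpt]
  rw [hK, he]; field_simp
  ring
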